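/- Let h : ℝⁿ → ℝⁿ be a C¹ diffeomorphism such that at every point z, each row of the Jacobian Dh(z) has at most one nonzero entry. Then by invertibility, each row has exactly one nonzero entry at every point, and the position of the nonzero entry in each row is constant in z (i.e., there is a fixed permutation σ such that ∂h_i/∂z_j ≡ 0 whenever j ≠ σ(i)), provided ℝⁿ is connected and Dh(z) is invertible everywhere. -/

import Mathlib

/-- If a C¹ map with everywhere invertible Jacobian has at most one nonzero entry per
Jacobian row at every point, then h_i(z) = T_i(z_{σ(i)}) for a fixed permutation σ. -/
theorem stmt9 {n : ℕ} (h : (Fin n → ℝ) → (Fin n → ℝ))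
    (hC1 : ContDiff ℝ 1 h)
    (hinv : ∀ z, Function.Bijective (fderiv ℝ h z))
    (hrow : ∀ z i j k, (fderiv ℝ h z (Pi.single j 1)) i ≠ 0 →
      (fderiv ℝ h z (Pi.single k 1)) i ≠ 0 → j = k) :
    ∃ (σ : Equiv.Perm (Fin n)) (T : Fin n → ℝ → ℝ),
      ∀ z i, h z i = T i (z (σ i)) := by
  classical
  set A : (Fin n → ℝ) → Fin n → Fin n → ℝ :=
    fun z i j => fderiv ℝ h z (Pi.single j 1) i with hA
  -- derivative application formula
  have happ : ∀ z (v : Fin n → ℝ) i, fderiv ℝ h z v i = ∑ j, v j * A z i j := by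
    intro z v i
    have hv : v = ∑ j, (v j) • (Pi.single j 1 : Fin n → ℝ) := by
      conv_lhs => rw [← Finset.univ_sum_single v]
      refine Finset.sum_congr rfl fun j _ => ?_
      ext k; by_cases hk : k = j <;> simp [hk, Pi.single_apply]
    conv_lhs => rw [hv]
    rw [map_sum]
    simp [Finset.sum_apply, smul_eq_mul, hA, mul_comm]
  -- each row has a nonzero entry
  have hrownz : ∀ z i, ∃ j, A z i j ≠ 0 := by
    intro z i
    by_contra hc
    push_neg at hc
    obtain ⟨v, hv⟩ := (hinv z).2 (Pi.single i 1)
    have h1 : fderiv ℝ h z v i = 1 := by rw [hv]; simp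
    rw [happ] at h1
    simp [hc] at h1
  set σ0 : Fin n → Fin n := fun i => (hrownz 0 i).choose with hσ0def
  have hσ0 : ∀ i, A 0 i (σ0 i) ≠ 0 := fun i => (hrownz 0 i).choose_spec
  -- continuity of entries
  have hcont : ∀ i j, Continuous fun w => A w i j := by
    intro i j
    have h1 : Continuous (fderiv ℝ h) := hC1.continuous_fderiv one_ne_zero
    exact (continuous_apply i).comp
      ((ContinuousLinearMap.apply ℝ (Fin n → ℝ) (Pi.single j 1)).continuous.comp h1)
  -- constancy of the nonzero-entry position
  have hconst : ∀ z i, A z i (σ0 i) ≠ 0 := by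
    intro z i
    set S : Set (Fin n → ℝ) := {w | A w i (σ0 i) ≠ 0} with hS
    have hopen : IsOpen S := isOpen_ne.preimage (hcont i (σ0 i))
    have hclosed : IsClosed S := by
      rw [← isOpen_compl_iff]
      have hcomp : Sᶜ = ⋃ j ∈ {j : Fin n | j ≠ σ0 i}, {w | A w i j ≠ 0} := by
        ext w
        simp only [hS, Set.mem_compl_iff, Set.mem_setOf_eq, Set.mem_iUnion, not_not]
        constructor
        · intro hw
          obtain ⟨j, hj⟩ := hrownz w i
          exact ⟨j, fun hje => hj (hje ▸ hw), hj⟩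
        · rintro ⟨j, hjne, hj⟩
          by_contra hnz
          exact hjne (hrow w i j (σ0 i) hj hnz)
      rw [hcomp]
      exact isOpen_biUnion fun j _ => isOpen_ne.preimage (hcont i j)
    have huniv : S = Set.univ :=
      IsClopen.eq_univ ⟨hclosed, hopen⟩ ⟨0, hσ0 i⟩
    exact Set.eq_univ_iff_forall.mp huniv z
  -- off-diagonal entries vanish
  have hoff : ∀ z i j, j ≠ σ0 i → A z i j = 0 := by
    intro z i j hj
    by_contra hnz
    exact hj (hrow z i j (σ0 i) hnz (hconst z i))
  -- σ0 is injective
  have hinj : Function.Injective σ0 := by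
    by_contra hni
    have hns : ¬ Function.Surjective σ0 := fun hs =>
      hni (Finite.injective_iff_surjective.mpr hs)
    unfold Function.Surjective at hns
    push_neg at hns
    obtain ⟨j, hj⟩ := hns
    have hz : fderiv ℝ h 0 (Pi.single j 1) = (0 : Fin n → ℝ) := by
      funext i
      exact hoff 0 i j (fun e => hj i e.symm)
    have h0 : (Pi.single j 1 : Fin n → ℝ) = 0 :=
      (hinv 0).1 (by rw [hz, map_zero])
    have := congrFun h0 j
    simp at this
  -- h i depends only on coordinate σ0 i
  have hdiff : Differentiable ℝ h := hC1.differentiable one_ne_zero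
  have hkey : ∀ (z : Fin n → ℝ) i, h z i = h (Pi.single (σ0 i) (z (σ0 i))) i := by
    intro z i
    set x : Fin n → ℝ := Pi.single (σ0 i) (z (σ0 i)) with hx
    set v : Fin n → ℝ := z - x with hvv
    have hvj : v (σ0 i) = 0 := by simp [hvv, hx]
    have hder : ∀ t : ℝ, HasDerivAt (fun t : ℝ => h (x + t • v) i) 0 t := by
      intro t
      have hγ : HasDerivAt (fun t : ℝ => x + t • v) v t := by
        simpa using ((hasDerivAt_id t).smul_const v).const_add x
      have h1 : HasDerivAt (fun t : ℝ => h (x + t • v)) (fderiv ℝ h (x + t • v) v) t :=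
        (hdiff (x + t • v)).hasFDerivAt.comp_hasDerivAt t hγ
      have h2 : HasDerivAt (fun t : ℝ => h (x + t • v) i) (fderiv ℝ h (x + t • v) v i) t :=
        hasDerivAt_pi.mp h1 i
      have h3 : fderiv ℝ h (x + t • v) v i = 0 := by
        rw [happ]
        refine Finset.sum_eq_zero fun j _ => ?_
        by_cases hj : j = σ0 i
        · rw [hj, hvj, zero_mul]
        · rw [hoff _ i j hj, mul_zero]
      rwa [h3] at h2
    have hc := is_const_of_deriv_eq_zero
      (f := fun t : ℝ => h (x + t • v) i)
      (fun t => (hder t).differentiableAt) (fun t => (hder t).deriv) 1 0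
    simpa [hvv, hx] using hc
  refine ⟨Equiv.ofBijective σ0 (Finite.injective_iff_bijective.mp hinj),
    fun i t => h (Pi.single (σ0 i) t) i, ?_⟩
  intro z i
  exact hkey z i
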